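/- Let ρ = ∑_{i∈I} p_i |e_i⟩⟨e_i| ⊗ ϱ_i be a density matrix on ℂ^d ⊗ (ℂ^{D_1} ⊗ ⋯ ⊗ ℂ^{D_N}), where {e_i} is an orthonormal family in ℂ^d, p_i are probabilities, ϱ_i are density matrices on the environment space, and assume that for every k the single-party reductions satisfy ϱ_i^k ϱ_j^k = 0 for i ≠ j. Let Π_i^k be the support projector of ϱ_i^k. Then for every nonempty subset K ⊆ {1,…,N}: ∑_{i∈I} (1_S ⊗ ⊗_{k∈K} Π_i^k ⊗ 1) ρ (1_S ⊗ ⊗_{k∈K} Π_i^k ⊗ 1) = ρ, i.e., the local measurements {Π_i^k} are Bohr non-disturbing on ρ; the same holds when the projector |e_i⟩⟨e_i| is included on the system factor. -/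

import Mathlib

open scoped Kronecker Matrix ComplexOrder BigOperators
open Matrix

noncomputable section

/-- The rank-one operator `|v⟩⟨w| = v wᴴ`. -/
def ketBra {n : Type*} (v w : n → ℂ) : Matrix n n ℂ := Matrix.vecMulVec v (star w)

/-- A density matrix: positive semidefinite with unit trace. -/
def IsDensityMatrix {n : Type*} [Fintype n] (ρ : Matrix n n ℂ) : Prop :=
  ρ.PosSemidef ∧ ρ.trace = 1

/-- An orthonormal family of vectors. -/
def OrthonormalFamily {n I : Type*} [Fintype n] [DecidableEq I] (e : I → n → ℂ) : Prop :=
  ∀ i j, star (e i) ⬝ᵥ e j = (if i = j then 1 else 0)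

/-- The `N`-fold Kronecker (tensor) product of a family of matrices. -/
def tensorFamily {N : ℕ} {D : Fin N → ℕ} (M : ∀ k, Matrix (Fin (D k)) (Fin (D k)) ℂ) :
    Matrix (∀ k, Fin (D k)) (∀ k, Fin (D k)) ℂ :=
  fun a a' => ∏ k, M k (a k) (a' k)

/-- The Kronecker (tensor) product of the matrices `M k` over the factors `k ∈ K`. -/
def tensorOn {N : ℕ} {D : Fin N → ℕ} (K : Finset (Fin N))
    (M : ∀ k, Matrix (Fin (D k)) (Fin (D k)) ℂ) :
    Matrix (∀ k : K, Fin (D k.1)) (∀ k : K, Fin (D k.1)) ℂ :=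
  fun a a' => ∏ k : K, M k.1 (a k) (a' k)

/-- The partial trace of a matrix on an `N`-fold tensor product over all
tensor factors *not* in `K` (entrywise: sum over equal indices in the traced factors). -/
def reduceTo {N : ℕ} {D : Fin N → ℕ} (K : Finset (Fin N))
    (M : Matrix (∀ k, Fin (D k)) (∀ k, Fin (D k)) ℂ) :
    Matrix (∀ k : K, Fin (D k.1)) (∀ k : K, Fin (D k.1)) ℂ :=
  fun a a' => ∑ b : ∀ k : {k : Fin N // k ∉ K}, Fin (D k.1),
    M (fun k => if h : k ∈ K then a ⟨k, h⟩ else b ⟨k, h⟩)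
      (fun k => if h : k ∈ K then a' ⟨k, h⟩ else b ⟨k, h⟩)

/-- The single-party reduction: the partial trace over all tensor factors except the `k`-th. -/
def reduceSingle {N : ℕ} {D : Fin N → ℕ} (k : Fin N)
    (M : Matrix (∀ l, Fin (D l)) (∀ l, Fin (D l)) ℂ) :
    Matrix (Fin (D k)) (Fin (D k)) ℂ :=
  fun a a' => ∑ b : ∀ l : {l : Fin N // l ≠ k}, Fin (D l.1),
    M (fun l => if h : l = k then cast (congrArg (fun i => Fin (D i)) h.symm) a else b ⟨l, h⟩)
      (fun l => if h : l = k then cast (congrArg (fun i => Fin (D i)) h.symm) a' else b ⟨l, h⟩)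

/-- The support projector of a Hermitian matrix: the orthogonal projection onto its range. -/
def suppProj {n : Type*} [Fintype n] [DecidableEq n] (A : Matrix n n ℂ) : Matrix n n ℂ :=
  if hA : A.IsHermitian then
    (hA.eigenvectorUnitary : Matrix n n ℂ) *
      Matrix.diagonal (fun i => if hA.eigenvalues i = 0 then (0 : ℂ) else 1) *
      (hA.eigenvectorUnitary : Matrix n n ℂ)ᴴ
  else 0

/-! ### Auxiliary lemmas -/

section AuxGeneral

lemma myKetBra_mul {n : Type*} [Fintype n] (v w x y : n → ℂ) :
    Matrix.vecMulVec v (star w) * Matrix.vecMulVec x (star y)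
      = (star w ⬝ᵥ x) • Matrix.vecMulVec v (star y) := by
  ext a b
  simp only [Matrix.mul_apply, Matrix.vecMulVec_apply, Matrix.smul_apply, dotProduct,
    Pi.star_apply, smul_eq_mul, Finset.sum_mul]
  apply Finset.sum_congr rfl
  intro c _
  ring

open scoped MatrixOrder in
lemma myPsd_trace_zero {n : Type*} [Fintype n] [DecidableEq n] {σ : Matrix n n ℂ}
    (hσ : σ.PosSemidef) (h : σ.trace = 0) : σ = 0 := by
  obtain ⟨B, hB⟩ := CStarAlgebra.nonneg_iff_eq_star_mul_self.mp hσ.nonneg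
  rw [Matrix.star_eq_conjTranspose] at hB
  subst hB
  rw [Matrix.conjTranspose_mul_self_eq_zero]
  have hdiag : ∀ j : n, (Bᴴ * B) j j = star (fun i => B i j) ⬝ᵥ (fun i => B i j) := by
    intro j
    simp [Matrix.mul_apply, dotProduct, Matrix.conjTranspose_apply]
  have hnn : ∀ j ∈ Finset.univ, (0:ℂ) ≤ (Bᴴ * B) j j := by
    intro j _
    rw [hdiag j]
    exact dotProduct_star_self_nonneg _
  have hz : ∀ j ∈ Finset.univ, (Bᴴ * B) j j = 0 :=
    (Finset.sum_eq_zero_iff_of_nonneg hnn).mp h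
  ext i j
  have := (dotProduct_star_self_eq_zero).mp ((hdiag j).symm.trans (hz j (Finset.mem_univ j)))
  exact congrFun this i

open scoped MatrixOrder in
lemma mySandwich_zero {n : Type*} [Fintype n] [DecidableEq n] {σ F : Matrix n n ℂ}
    (hσ : σ.PosSemidef) (h : F * σ * Fᴴ = 0) : F * σ = 0 := by
  have hs : CFC.sqrt σ * CFC.sqrt σ = σ :=
    CFC.sqrt_mul_sqrt_self σ hσ.nonneg
  have hherm : (CFC.sqrt σ).conjTranspose = CFC.sqrt σ :=
    (CFC.sqrt_nonneg σ).posSemidef.1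
  have : (F * CFC.sqrt σ) * (F * CFC.sqrt σ)ᴴ = 0 := by
    rw [Matrix.conjTranspose_mul, hherm]
    calc F * CFC.sqrt σ * (CFC.sqrt σ * Fᴴ) = F * (CFC.sqrt σ * CFC.sqrt σ) * Fᴴ := by
          noncomm_ring
      _ = 0 := by rw [hs, h]
  have hFz : F * CFC.sqrt σ = 0 := Matrix.self_mul_conjTranspose_eq_zero.mp this
  calc F * σ = F * CFC.sqrt σ * CFC.sqrt σ := by rw [Matrix.mul_assoc, hs]
    _ = 0 := by rw [hFz, Matrix.zero_mul]

end AuxGeneral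

section AuxSuppProj

variable {n : Type*} [Fintype n] [DecidableEq n] {A : Matrix n n ℂ}

lemma conj_diag_mul (U : Matrix n n ℂ) (hu : Uᴴ * U = 1) (d₁ d₂ : n → ℂ) :
    (U * Matrix.diagonal d₁ * Uᴴ) * (U * Matrix.diagonal d₂ * Uᴴ)
      = U * Matrix.diagonal (fun i => d₁ i * d₂ i) * Uᴴ := by
  calc (U * Matrix.diagonal d₁ * Uᴴ) * (U * Matrix.diagonal d₂ * Uᴴ)
      = U * (Matrix.diagonal d₁ * ((Uᴴ * U) * Matrix.diagonal d₂)) * Uᴴ := by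
        simp only [Matrix.mul_assoc]
    _ = _ := by
        rw [hu, Matrix.one_mul, Matrix.diagonal_mul_diagonal]

lemma suppProj_master (hA : A.IsHermitian) :
    ∃ (U : Matrix n n ℂ) (dl dc dq : n → ℂ),
      Uᴴ * U = 1 ∧ A = U * Matrix.diagonal dl * Uᴴ ∧
      suppProj A = U * Matrix.diagonal dc * Uᴴ ∧
      (∀ i, dc i * dl i = dl i) ∧ (∀ i, dl i * dc i = dl i) ∧
      (∀ i, dc i * dc i = dc i) ∧ (∀ i, star (dc i) = dc i) ∧
      (∀ i, dc i = dq i * dl i) ∧ (∀ i, dc i = dl i * dq i) := by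
  refine ⟨(hA.eigenvectorUnitary : Matrix n n ℂ),
    (fun i => (hA.eigenvalues i : ℂ)),
    (fun i => if hA.eigenvalues i = 0 then (0 : ℂ) else 1),
    (fun i => if hA.eigenvalues i = 0 then (0 : ℂ) else ((hA.eigenvalues i : ℂ))⁻¹),
    ?_, ?_, ?_, ?_, ?_, ?_, ?_, ?_, ?_⟩
  · rw [← Matrix.star_eq_conjTranspose]
    exact Matrix.mem_unitaryGroup_iff'.mp (hA.eigenvectorUnitary).2
  · have := hA.spectral_theorem
    rwa [← Matrix.star_eq_conjTranspose]
  · rw [suppProj, dif_pos hA, ← Matrix.star_eq_conjTranspose]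
  · intro i; by_cases h : hA.eigenvalues i = 0 <;> simp [h]
  · intro i; by_cases h : hA.eigenvalues i = 0 <;> simp [h]
  · intro i; by_cases h : hA.eigenvalues i = 0 <;> simp [h]
  · intro i; by_cases h : hA.eigenvalues i = 0 <;> simp [h]
  · intro i; by_cases h : hA.eigenvalues i = 0
    · simp [h]
    · have : (hA.eigenvalues i : ℂ) ≠ 0 := by exact_mod_cast h
      simp [h, inv_mul_cancel₀ this]
  · intro i; by_cases h : hA.eigenvalues i = 0
    · simp [h]
    · have : (hA.eigenvalues i : ℂ) ≠ 0 := by exact_mod_cast h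
      simp [h, mul_inv_cancel₀ this]

lemma suppProj_mul_self (hA : A.IsHermitian) : suppProj A * A = A := by
  obtain ⟨U, dl, dc, dq, hu, hAd, hP, h1, _, _, _, _, _⟩ := suppProj_master hA
  rw [hP]
  conv_lhs => rw [hAd]
  rw [conj_diag_mul U hu]
  conv_rhs => rw [hAd]
  congr 1
  congr 1
  exact congrArg Matrix.diagonal (funext h1)

lemma suppProj_idem (hA : A.IsHermitian) : suppProj A * suppProj A = suppProj A := by
  obtain ⟨U, dl, dc, dq, hu, hAd, hP, _, _, h3, _, _, _⟩ := suppProj_master hA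
  rw [hP, conj_diag_mul U hu]
  congr 1
  congr 1
  exact congrArg Matrix.diagonal (funext h3)

lemma suppProj_herm (hA : A.IsHermitian) : (suppProj A)ᴴ = suppProj A := by
  obtain ⟨U, dl, dc, dq, hu, hAd, hP, _, _, _, h4, _, _⟩ := suppProj_master hA
  rw [hP]
  simp only [Matrix.conjTranspose_mul, Matrix.conjTranspose_conjTranspose,
    Matrix.diagonal_conjTranspose, Matrix.mul_assoc]
  congr 1
  congr 1
  exact congrArg Matrix.diagonal (funext fun i => h4 i)

lemma suppProj_mul_eq_zero (hA : A.IsHermitian) {B : Matrix n n ℂ} (h : A * B = 0) :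
    suppProj A * B = 0 := by
  obtain ⟨U, dl, dc, dq, hu, hAd, hP, _, _, _, _, h5, _⟩ := suppProj_master hA
  have key : suppProj A = (U * Matrix.diagonal dq * Uᴴ) * A := by
    rw [hP]
    conv_rhs => rw [hAd]
    rw [conj_diag_mul U hu]
    congr 1
    congr 1
    exact congrArg Matrix.diagonal (funext h5)
  rw [key, Matrix.mul_assoc, h, Matrix.mul_zero]

end AuxSuppProj

section AuxTensor

variable {N : ℕ} {D : Fin N → ℕ}

lemma tensorFamily_one : tensorFamily (fun k => (1 : Matrix (Fin (D k)) (Fin (D k)) ℂ)) = 1 := by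
  ext a a'
  simp only [tensorFamily, Matrix.one_apply]
  rw [Fintype.prod_boole]
  simp [funext_iff]

lemma tensorFamily_mul (M M' : ∀ k, Matrix (Fin (D k)) (Fin (D k)) ℂ) :
    tensorFamily M * tensorFamily M' = tensorFamily (fun k => M k * M' k) := by
  ext a a'
  simp only [tensorFamily, Matrix.mul_apply]
  calc (∑ b : ∀ k, Fin (D k), (∏ k, M k (a k) (b k)) * ∏ k, M' k (b k) (a' k))
      = ∑ b : ∀ k, Fin (D k), ∏ k, (M k (a k) (b k) * M' k (b k) (a' k)) := by
        refine Finset.sum_congr rfl fun b _ => ?_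
        rw [Finset.prod_mul_distrib]
    _ = ∏ k, ∑ c : Fin (D k), M k (a k) c * M' k c (a' k) := by
        rw [Finset.prod_univ_sum]
        rw [Fintype.piFinset_univ]

lemma tensorFamily_conjTranspose (M : ∀ k, Matrix (Fin (D k)) (Fin (D k)) ℂ) :
    (tensorFamily M)ᴴ = tensorFamily (fun k => (M k)ᴴ) := by
  ext a a'
  simp only [tensorFamily, Matrix.conjTranspose_apply, star_prod]

def insAt (k : Fin N) (x : Fin (D k)) (b : ∀ l : {l : Fin N // l ≠ k}, Fin (D l.1)) :
    ∀ l, Fin (D l) :=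
  fun l => if h : l = k then cast (congrArg (fun i => Fin (D i)) h.symm) x else b ⟨l, h⟩

@[simp] lemma insAt_self (k : Fin N) (x : Fin (D k)) (b) : insAt k x b k = x := by
  simp [insAt]

lemma insAt_ne (k : Fin N) (x : Fin (D k)) (b) {l : Fin N} (h : l ≠ k) :
    insAt k x b l = b ⟨l, h⟩ := dif_neg h

lemma reduceSingle_apply (k : Fin N) (M : Matrix (∀ l, Fin (D l)) (∀ l, Fin (D l)) ℂ)
    (x y : Fin (D k)) :
    reduceSingle k M x y = ∑ b : ∀ l : {l : Fin N // l ≠ k}, Fin (D l.1),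
      M (insAt k x b) (insAt k y b) := rfl

def splitAt (k : Fin N) :
    (∀ l, Fin (D l)) ≃ Fin (D k) × (∀ l : {l : Fin N // l ≠ k}, Fin (D l.1)) where
  toFun a := (a k, fun l => a l.1)
  invFun p := insAt k p.1 p.2
  left_inv a := by
    funext l
    by_cases h : l = k
    · subst h; simp [insAt]
    · exact insAt_ne k _ _ h
  right_inv p := by
    refine Prod.ext (insAt_self k p.1 p.2) ?_
    funext l
    exact insAt_ne k _ _ l.2

lemma tensorFamily_single_apply (A : ∀ l, Matrix (Fin (D l)) (Fin (D l)) ℂ) (k : Fin N)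
    (a c : ∀ l, Fin (D l)) :
    tensorFamily (fun l => if l = k then A l else 1) a c
      = A k (a k) (c k) * (if ∀ l, l ≠ k → a l = c l then 1 else 0) := by
  unfold tensorFamily
  rw [← Finset.mul_prod_erase Finset.univ _ (Finset.mem_univ k)]
  congr 1
  · simp
  calc (∏ l ∈ Finset.univ.erase k, (fun l => if l = k then A l else 1) l (a l) (c l))
      = ∏ l ∈ Finset.univ.erase k, (if l ≠ k → a l = c l then (1:ℂ) else 0) := by
        refine Finset.prod_congr rfl fun l hl => ?_
        have hlk : l ≠ k := (Finset.mem_erase.mp hl).1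
        simp only [if_neg hlk, Matrix.one_apply]
        by_cases h : a l = c l
        · simp [h]
        · simp [h, hlk]
    _ = if ∀ l, l ≠ k → a l = c l then 1 else 0 := by
        rw [Finset.prod_boole]
        by_cases h : ∀ l, l ≠ k → a l = c l
        · rw [if_pos h, if_pos (fun l _ hlk => h l hlk)]
        · rw [if_neg h, if_neg (fun contra => h (fun l hlk =>
            contra l (Finset.mem_erase.mpr ⟨hlk, Finset.mem_univ l⟩) hlk))]

lemma trace_tensorFamily_single_mul (A : ∀ l, Matrix (Fin (D l)) (Fin (D l)) ℂ) (k : Fin N)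
    (σ : Matrix (∀ l, Fin (D l)) (∀ l, Fin (D l)) ℂ) :
    (tensorFamily (fun l => if l = k then A l else 1) * σ).trace
      = (A k * reduceSingle k σ).trace := by
  rw [Matrix.trace]
  simp only [Matrix.diag_apply, Matrix.mul_apply, tensorFamily_single_apply]
  rw [← Equiv.sum_comp (splitAt k).symm
    (fun a => ∑ c, A k (a k) (c k) * (if ∀ l, l ≠ k → a l = c l then 1 else 0) * σ c a)]
  have hsymm : ∀ p : Fin (D k) × (∀ l : {l : Fin N // l ≠ k}, Fin (D l.1)),
      (splitAt k).symm p = insAt k p.1 p.2 := fun p => rfl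
  calc (∑ p : Fin (D k) × (∀ l : {l : Fin N // l ≠ k}, Fin (D l.1)),
        ∑ c, A k ((splitAt k).symm p k) (c k)
          * (if ∀ l, l ≠ k → (splitAt k).symm p l = c l then 1 else 0)
          * σ c ((splitAt k).symm p))
      = ∑ p : Fin (D k) × (∀ l : {l : Fin N // l ≠ k}, Fin (D l.1)),
        ∑ q : Fin (D k) × (∀ l : {l : Fin N // l ≠ k}, Fin (D l.1)),
          A k p.1 q.1 * (if p.2 = q.2 then 1 else 0)
            * σ (insAt k q.1 q.2) (insAt k p.1 p.2) := by
        refine Finset.sum_congr rfl fun p _ => ?_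
        rw [← Equiv.sum_comp (splitAt k).symm
          (fun c => A k ((splitAt k).symm p k) (c k)
            * (if ∀ l, l ≠ k → (splitAt k).symm p l = c l then 1 else 0)
            * σ c ((splitAt k).symm p))]
        refine Finset.sum_congr rfl fun q _ => ?_
        rw [hsymm, hsymm]
        have hite : (if ∀ l, l ≠ k → insAt k p.1 p.2 l = insAt k q.1 q.2 l then (1:ℂ) else 0)
            = if p.2 = q.2 then 1 else 0 := by
          congr 1
          simp only [eq_iff_iff]
          constructor
          · intro hh
            funext l
            have := hh l.1 l.2
            rwa [insAt_ne k _ _ l.2, insAt_ne k _ _ l.2] at this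
          · intro hh l hl
            rw [insAt_ne k _ _ hl, insAt_ne k _ _ hl, hh]
        rw [insAt_self, insAt_self, hite]
    _ = ∑ p : Fin (D k) × (∀ l : {l : Fin N // l ≠ k}, Fin (D l.1)),
          ∑ y : Fin (D k), A k p.1 y * σ (insAt k y p.2) (insAt k p.1 p.2) := by
        refine Finset.sum_congr rfl fun p _ => ?_
        rw [Fintype.sum_prod_type_right]
        rw [Finset.sum_comm]
        refine Finset.sum_congr rfl fun y _ => ?_
        rw [Finset.sum_eq_single p.2]
        · rw [if_pos rfl, mul_one]
        · intro b _ hb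
          rw [if_neg (fun hh => hb hh.symm), mul_zero, zero_mul]
        · intro h; exact absurd (Finset.mem_univ _) h
    _ = (A k * reduceSingle k σ).trace := by
        rw [Matrix.trace]
        simp only [Matrix.diag_apply, Matrix.mul_apply, reduceSingle_apply]
        rw [Fintype.sum_prod_type]
        refine Finset.sum_congr rfl fun x _ => ?_
        rw [Finset.sum_comm]
        refine Finset.sum_congr rfl fun y _ => ?_
        rw [Finset.mul_sum]

lemma reduceSingle_isHermitian (k : Fin N) {σ : Matrix (∀ l, Fin (D l)) (∀ l, Fin (D l)) ℂ}
    (hσ : σ.IsHermitian) : (reduceSingle k σ).IsHermitian := by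
  refine Matrix.IsHermitian.ext fun x y => ?_
  rw [reduceSingle_apply, reduceSingle_apply, star_sum]
  refine Finset.sum_congr rfl fun b _ => ?_
  exact hσ.apply _ _

/-- Single-factor support projector fixes the state. -/
lemma single_proj_fix (k : Fin N) {σ : Matrix (∀ l, Fin (D l)) (∀ l, Fin (D l)) ℂ}
    (hσ : σ.PosSemidef) :
    tensorFamily (fun l => if l = k then suppProj (reduceSingle l σ) else 1) * σ = σ := by
  set P : ∀ l, Matrix (Fin (D l)) (Fin (D l)) ℂ := fun l => suppProj (reduceSingle l σ) with hPdef
  set E := tensorFamily (fun l => if l = k then P l else 1) with hE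
  have hredh : ∀ l, (reduceSingle l σ).IsHermitian := fun l => reduceSingle_isHermitian l hσ.1
  have hEherm : Eᴴ = E := by
    rw [hE, tensorFamily_conjTranspose]
    refine congrArg tensorFamily (funext fun l => ?_)
    rw [apply_ite (fun M : Matrix (Fin (D l)) (Fin (D l)) ℂ => Mᴴ), Matrix.conjTranspose_one]
    simp only [hPdef, suppProj_herm (hredh l)]
  have hEidem : E * E = E := by
    rw [hE, tensorFamily_mul]
    refine congrArg tensorFamily (funext fun l => ?_)
    by_cases h : l = k
    · rw [if_pos h]; exact suppProj_idem (hredh l)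
    · rw [if_neg h]; exact Matrix.one_mul 1
  have htr1 : (E * σ).trace = (P k * reduceSingle k σ).trace :=
    trace_tensorFamily_single_mul P k σ
  have htrσ : σ.trace = (reduceSingle k σ).trace := by
    have h1 : tensorFamily
        (fun l => if l = k then (1 : Matrix (Fin (D l)) (Fin (D l)) ℂ) else 1) * σ = σ := by
      rw [show (fun l => if l = k then (1 : Matrix (Fin (D l)) (Fin (D l)) ℂ) else 1)
          = fun l => (1 : Matrix (Fin (D l)) (Fin (D l)) ℂ) from funext fun l => ite_self _,
        tensorFamily_one, Matrix.one_mul]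
    have h2 := trace_tensorFamily_single_mul
      (fun l => (1 : Matrix (Fin (D l)) (Fin (D l)) ℂ)) k σ
    rw [h1, Matrix.one_mul] at h2
    exact h2
  have hPred : P k * reduceSingle k σ = reduceSingle k σ := suppProj_mul_self (hredh k)
  have hEE : (1 - E) * (1 - E) = 1 - E := by
    rw [Matrix.sub_mul, Matrix.one_mul, Matrix.mul_sub, Matrix.mul_one, hEidem, sub_self, sub_zero]
  have hconj : (1 - E)ᴴ = 1 - E := by
    rw [Matrix.conjTranspose_sub, Matrix.conjTranspose_one, hEherm]
  have hzero : (1 - E) * σ * (1 - E)ᴴ = 0 := by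
    apply myPsd_trace_zero (hσ.mul_mul_conjTranspose_same (1 - E))
    rw [hconj, Matrix.trace_mul_cycle, hEE, Matrix.sub_mul, Matrix.one_mul,
      Matrix.trace_sub, htr1, hPred, htrσ, sub_self]
  have hfz := mySandwich_zero hσ hzero
  rw [Matrix.sub_mul, Matrix.one_mul, sub_eq_zero] at hfz
  exact hfz.symm

/-- Single-factor support projector kills an orthogonal state. -/
lemma single_proj_kill (k : Fin N) {σ τ : Matrix (∀ l, Fin (D l)) (∀ l, Fin (D l)) ℂ}
    (hσ : σ.PosSemidef) (hτ : τ.PosSemidef)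
    (hz : reduceSingle k σ * reduceSingle k τ = 0) :
    tensorFamily (fun l => if l = k then suppProj (reduceSingle l σ) else 1) * τ = 0 := by
  set P : ∀ l, Matrix (Fin (D l)) (Fin (D l)) ℂ := fun l => suppProj (reduceSingle l σ) with hPdef
  set E := tensorFamily (fun l => if l = k then P l else 1) with hE
  have hredh : ∀ l, (reduceSingle l σ).IsHermitian := fun l => reduceSingle_isHermitian l hσ.1
  have hEherm : Eᴴ = E := by
    rw [hE, tensorFamily_conjTranspose]
    refine congrArg tensorFamily (funext fun l => ?_)
    rw [apply_ite (fun M : Matrix (Fin (D l)) (Fin (D l)) ℂ => Mᴴ), Matrix.conjTranspose_one]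
    simp only [hPdef, suppProj_herm (hredh l)]
  have hEidem : E * E = E := by
    rw [hE, tensorFamily_mul]
    refine congrArg tensorFamily (funext fun l => ?_)
    by_cases h : l = k
    · rw [if_pos h]; exact suppProj_idem (hredh l)
    · rw [if_neg h]; exact Matrix.one_mul 1
  have hPz : P k * reduceSingle k τ = 0 := suppProj_mul_eq_zero (hredh k) hz
  have htr1 : (E * τ).trace = (P k * reduceSingle k τ).trace :=
    trace_tensorFamily_single_mul P k τ
  have hzero : E * τ * Eᴴ = 0 := by
    apply myPsd_trace_zero (hτ.mul_mul_conjTranspose_same E)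
    rw [hEherm, Matrix.trace_mul_cycle, hEidem, htr1, hPz, Matrix.trace_zero]
  exact mySandwich_zero hτ hzero

/-- Induction: the product of fixing single-factor projectors fixes. -/
lemma tensor_mem_fix (P : ∀ l, Matrix (Fin (D l)) (Fin (D l)) ℂ)
    (σ : Matrix (∀ l, Fin (D l)) (∀ l, Fin (D l)) ℂ)
    (hfix : ∀ k, tensorFamily (fun l => if l = k then P l else 1) * σ = σ)
    (K : Finset (Fin N)) :
    tensorFamily (fun l => if l ∈ K then P l else 1) * σ = σ := by
  induction K using Finset.induction_on with
  | empty =>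
      rw [show (fun l => if l ∈ (∅ : Finset (Fin N)) then P l else 1)
          = fun l => (1 : Matrix (Fin (D l)) (Fin (D l)) ℂ) from
        funext fun l => if_neg (Finset.notMem_empty l), tensorFamily_one, Matrix.one_mul]
  | @insert k K hk ih =>
      have hsplit : (fun l => if l ∈ insert k K then P l else 1)
          = fun l => (if l = k then P l else 1) * (if l ∈ K then P l else 1) := by
        funext l
        by_cases h1 : l = k
        · subst h1
          simp [hk]
        · by_cases h2 : l ∈ K <;> simp [h1, h2, Finset.mem_insert]
      rw [hsplit, ← tensorFamily_mul, Matrix.mul_assoc, ih, hfix]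

/-- If one factor kills, the whole product kills. -/
lemma tensor_mem_kill (P : ∀ l, Matrix (Fin (D l)) (Fin (D l)) ℂ)
    (τ : Matrix (∀ l, Fin (D l)) (∀ l, Fin (D l)) ℂ)
    {k0 : Fin N} {K : Finset (Fin N)} (hk0 : k0 ∈ K)
    (hkill : tensorFamily (fun l => if l = k0 then P l else 1) * τ = 0) :
    tensorFamily (fun l => if l ∈ K then P l else 1) * τ = 0 := by
  have hsplit : (fun l => if l ∈ K then P l else 1)
      = fun l => (if l ∈ K.erase k0 then P l else 1) * (if l = k0 then P l else 1) := by
    funext l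
    by_cases h1 : l = k0
    · subst h1
      simp [hk0, Finset.notMem_erase]
    · by_cases h2 : l ∈ K <;> simp [h1, h2, Finset.mem_erase]
  rw [hsplit, ← tensorFamily_mul, Matrix.mul_assoc, hkill, Matrix.mul_zero]

end AuxTensor

/-- Bohr non-disturbance of the local support-projector measurements on SBS states,
with and without the direct measurement on the system. -/
theorem stmt_6 {d N : ℕ} {D : Fin N → ℕ} {I : Type*} [Fintype I] [DecidableEq I]
    (p : I → ℝ) (hp0 : ∀ i, 0 ≤ p i) (hp1 : ∑ i, p i = 1)
    (e : I → Fin d → ℂ) (he : OrthonormalFamily e)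
    (ϱ : I → Matrix (∀ k, Fin (D k)) (∀ k, Fin (D k)) ℂ)
    (hϱ : ∀ i, IsDensityMatrix (ϱ i))
    (horth : ∀ k : Fin N, ∀ i j, i ≠ j → reduceSingle k (ϱ i) * reduceSingle k (ϱ j) = 0)
    (ρ : Matrix (Fin d × ∀ k, Fin (D k)) (Fin d × ∀ k, Fin (D k)) ℂ)
    (hρ : ρ = ∑ i, (p i : ℂ) • (ketBra (e i) (e i) ⊗ₖ ϱ i))
    (K : Finset (Fin N)) (hK : K.Nonempty) :
    (∑ i, ((1 : Matrix (Fin d) (Fin d) ℂ) ⊗ₖ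
        tensorFamily (fun k => if k ∈ K then suppProj (reduceSingle k (ϱ i)) else 1)) * ρ *
        ((1 : Matrix (Fin d) (Fin d) ℂ) ⊗ₖ
        tensorFamily (fun k => if k ∈ K then suppProj (reduceSingle k (ϱ i)) else 1)) = ρ) ∧
    (∑ i, (ketBra (e i) (e i) ⊗ₖ
        tensorFamily (fun k => if k ∈ K then suppProj (reduceSingle k (ϱ i)) else 1)) * ρ *
        (ketBra (e i) (e i) ⊗ₖ
        tensorFamily (fun k => if k ∈ K then suppProj (reduceSingle k (ϱ i)) else 1)) = ρ) := by
  obtain ⟨k0, hk0⟩ := hK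
  set T : I → Matrix (∀ k, Fin (D k)) (∀ k, Fin (D k)) ℂ :=
    fun i => tensorFamily (fun k => if k ∈ K then suppProj (reduceSingle k (ϱ i)) else 1)
    with hT
  -- T i fixes ϱ i on the left and right
  have hfixL : ∀ i, T i * ϱ i = ϱ i := fun i =>
    tensor_mem_fix _ _ (fun k => single_proj_fix k (hϱ i).1) K
  have hTherm : ∀ i, (T i)ᴴ = T i := by
    intro i
    rw [hT, tensorFamily_conjTranspose]
    refine congrArg tensorFamily (funext fun l => ?_)
    rw [apply_ite (fun M : Matrix (Fin (D l)) (Fin (D l)) ℂ => Mᴴ), Matrix.conjTranspose_one]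
    simp only [suppProj_herm (reduceSingle_isHermitian l (hϱ i).1.1)]
  have hfixR : ∀ i, ϱ i * T i = ϱ i := by
    intro i
    have := congrArg Matrix.conjTranspose (hfixL i)
    rw [Matrix.conjTranspose_mul, hTherm i, (hϱ i).1.1.eq] at this
    exact this
  -- T i kills ϱ j for i ≠ j
  have hkill : ∀ i j, i ≠ j → T i * ϱ j = 0 := by
    intro i j hij
    exact tensor_mem_kill _ _ hk0
      (single_proj_kill k0 (hϱ i).1 (hϱ j).1 (horth k0 i j hij))
  -- sandwich computation
  have hTT : ∀ i j, T i * ϱ j * T i = if i = j then ϱ i else 0 := by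
    intro i j
    by_cases h : i = j
    · subst h
      rw [if_pos rfl, hfixL i, hfixR i]
    · rw [if_neg h, hkill i j h, Matrix.zero_mul]
  have hketBra : ∀ i, ketBra (e i) (e i) * ketBra (e i) (e i) = ketBra (e i) (e i) := by
    intro i
    rw [ketBra, myKetBra_mul, he i i, if_pos rfl, one_smul]
  constructor
  · calc (∑ i, ((1 : Matrix (Fin d) (Fin d) ℂ) ⊗ₖ T i) * ρ *
          ((1 : Matrix (Fin d) (Fin d) ℂ) ⊗ₖ T i))
        = ∑ i, ∑ j, (p j : ℂ) •
            (((1 : Matrix (Fin d) (Fin d) ℂ) * ketBra (e j) (e j) *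
              (1 : Matrix (Fin d) (Fin d) ℂ)) ⊗ₖ (T i * ϱ j * T i)) := by
          refine Finset.sum_congr rfl fun i _ => ?_
          rw [hρ, Finset.mul_sum, Finset.sum_mul]
          refine Finset.sum_congr rfl fun j _ => ?_
          rw [Matrix.mul_smul, Matrix.smul_mul, Matrix.mul_kronecker_mul,
            Matrix.mul_kronecker_mul]
      _ = ∑ i, (p i : ℂ) • (ketBra (e i) (e i) ⊗ₖ ϱ i) := by
          refine Finset.sum_congr rfl fun i _ => ?_
          rw [Finset.sum_eq_single i]
          · rw [hTT i i, if_pos rfl, Matrix.one_mul, Matrix.mul_one]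
          · intro j _ hj
            rw [hTT i j, if_neg (fun hh => hj hh.symm), Matrix.kronecker_zero, smul_zero]
          · intro h; exact absurd (Finset.mem_univ _) h
      _ = ρ := hρ.symm
  · calc (∑ i, (ketBra (e i) (e i) ⊗ₖ T i) * ρ * (ketBra (e i) (e i) ⊗ₖ T i))
        = ∑ i, ∑ j, (p j : ℂ) •
            ((ketBra (e i) (e i) * ketBra (e j) (e j) * ketBra (e i) (e i)) ⊗ₖ
              (T i * ϱ j * T i)) := by
          refine Finset.sum_congr rfl fun i _ => ?_
          rw [hρ, Finset.mul_sum, Finset.sum_mul]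
          refine Finset.sum_congr rfl fun j _ => ?_
          rw [Matrix.mul_smul, Matrix.smul_mul, Matrix.mul_kronecker_mul,
            Matrix.mul_kronecker_mul]
      _ = ∑ i, (p i : ℂ) • (ketBra (e i) (e i) ⊗ₖ ϱ i) := by
          refine Finset.sum_congr rfl fun i _ => ?_
          rw [Finset.sum_eq_single i]
          · rw [hTT i i, if_pos rfl, hketBra i, hketBra i]
          · intro j _ hj
            rw [hTT i j, if_neg (fun hh => hj hh.symm), Matrix.kronecker_zero, smul_zero]
          · intro h; exact absurd (Finset.mem_univ _) h
      _ = ρ := hρ.symm
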